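/- arXiv:2601.15696 — 2 statements merged into one kernel-verified Lean document; each statement's English description precedes it below -/
import Mathlib

section
/- If U is a random element such that (X,Y) is conditionally independent of Z given σ(U), where U is measurable with respect to σ(Z), then X is conditionally independent of Y given Z if and only if X is conditionally independent of Y given σ(U). -/
open ProbabilityTheory MeasureTheory

/-- Key lemma: if `W ⫫ Z | m'` with `m' ≤ σ(Z)`, then for any measurable `s`,
`μ⟦W⁻¹' s | σ(Z)⟧ = μ⟦W⁻¹' s | m'⟧` a.e. -/
lemma condexp_comap_eq_of_condIndepFun {Ω : Type*} {m' mΩ : MeasurableSpace Ω}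
    [StandardBorelSpace Ω] {μ : Measure Ω} [IsFiniteMeasure μ]
    {E EZ : Type*} [MeasurableSpace E] [MeasurableSpace EZ]
    {W : Ω → E} {Z : Ω → EZ} (hW : Measurable W) (hZ : Measurable Z)
    (hm' : m' ≤ mΩ)
    (hUZ : m' ≤ MeasurableSpace.comap Z inferInstance)
    (hmZ : MeasurableSpace.comap Z inferInstance ≤ mΩ)
    (h : CondIndepFun m' hm' W Z μ) {s : Set E} (hs : MeasurableSet s) :
    (μ[(W ⁻¹' s).indicator (fun _ => (1 : ℝ)) | MeasurableSpace.comap Z inferInstance])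
      =ᵐ[μ] μ[(W ⁻¹' s).indicator (fun _ => (1 : ℝ)) | m'] := by
  set A := W ⁻¹' s with hA_def
  have hA : MeasurableSet[mΩ] A := hW hs
  have hf_int : Integrable (A.indicator (fun _ => (1 : ℝ))) μ :=
    (integrable_const (1 : ℝ)).indicator hA
  set g := μ[A.indicator (fun _ => (1 : ℝ)) | m'] with hg_def
  have hg_meas : StronglyMeasurable[m'] g := stronglyMeasurable_condExp
  have hg_int : Integrable g μ := integrable_condExp
  symm
  refine ae_eq_condExp_of_forall_setIntegral_eq hmZ hf_int
    (fun t _ _ => hg_int.integrableOn) (fun t ht _ => ?_)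
    (StronglyMeasurable.aestronglyMeasurable (hg_meas.mono hUZ))
  -- t is of the form Z ⁻¹' B
  obtain ⟨B, hB, rfl⟩ := ht
  have htm : MeasurableSet[mΩ] (Z ⁻¹' B) := hZ hB
  set G := Z ⁻¹' B with hG_def
  -- RHS
  have hRHS : ∫ x in G, A.indicator (fun _ => (1 : ℝ)) x ∂μ = (μ (A ∩ G)).toReal := by
    rw [setIntegral_indicator hA, setIntegral_const, smul_eq_mul, mul_one, Set.inter_comm, Measure.real_def]
  -- product identity from conditional independence
  have hprod : (μ[(A ∩ G).indicator (fun _ => (1 : ℝ)) | m'])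
      =ᵐ[μ] fun ω => g ω * (μ[G.indicator (fun _ => (1 : ℝ)) | m']) ω := by
    have := (condIndepFun_iff_condExp_inter_preimage_eq_mul hW hZ).mp h s B hs hB
    exact this
  have h1G_int : Integrable (G.indicator (fun _ => (1 : ℝ))) μ :=
    (integrable_const (1 : ℝ)).indicator htm
  have hg1G_int : Integrable (g * G.indicator (fun _ => (1 : ℝ))) μ := by
    have heq : g * G.indicator (fun _ => (1 : ℝ)) = G.indicator g := by
      funext x
      by_cases hx : x ∈ G <;> simp [Set.indicator_apply, hx]
    rw [heq]
    exact hg_int.indicator htm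
  have hpull : (μ[g * G.indicator (fun _ => (1 : ℝ)) | m'])
      =ᵐ[μ] g * μ[G.indicator (fun _ => (1 : ℝ)) | m'] :=
    condExp_mul_of_stronglyMeasurable_left hg_meas hg1G_int h1G_int
  -- LHS
  calc ∫ x in G, g x ∂μ
      = ∫ x, (g * G.indicator (fun _ => (1 : ℝ))) x ∂μ := by
        rw [← integral_indicator htm]
        congr 1
        funext x
        by_cases hx : x ∈ G <;> simp [Set.indicator_apply, hx]
    _ = ∫ x, (μ[g * G.indicator (fun _ => (1 : ℝ)) | m']) x ∂μ :=
        (integral_condExp hm').symm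
    _ = ∫ x, (μ[(A ∩ G).indicator (fun _ => (1 : ℝ)) | m']) x ∂μ := by
        refine integral_congr_ae ?_
        exact hpull.trans hprod.symm
    _ = ∫ x, (A ∩ G).indicator (fun _ => (1 : ℝ)) x ∂μ := integral_condExp hm'
    _ = (μ (A ∩ G)).toReal := by
        rw [integral_indicator (hA.inter htm), setIntegral_const, smul_eq_mul, mul_one, Measure.real_def]
    _ = ∫ x in G, A.indicator (fun _ => (1 : ℝ)) x ∂μ := hRHS.symm

/-- If `U = f ∘ Z` is a measurable function of `Z` and `(X, Y)` is conditionally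
independent of `Z` given `σ(U)`, then `X ⫫ Y | σ(Z)` iff `X ⫫ Y | σ(U)`. -/
theorem stmt0 {Ω : Type*} {mΩ : MeasurableSpace Ω} [StandardBorelSpace Ω]
    {μ : Measure Ω} [IsFiniteMeasure μ]
    {EX EY EZ EU : Type*} [MeasurableSpace EX] [MeasurableSpace EY]
    [MeasurableSpace EZ] [MeasurableSpace EU]
    (X : Ω → EX) (Y : Ω → EY) (Z : Ω → EZ) (U : Ω → EU)
    (hX : Measurable X) (hY : Measurable Y) (hZ : Measurable Z)
    (f : EZ → EU) (hf : Measurable f) (hU : U = f ∘ Z)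
    (hmU : MeasurableSpace.comap U inferInstance ≤ mΩ)
    (hmZ : MeasurableSpace.comap Z inferInstance ≤ mΩ)
    (h : CondIndepFun (MeasurableSpace.comap U inferInstance) hmU
      (fun ω => (X ω, Y ω)) Z μ) :
    CondIndepFun (MeasurableSpace.comap Z inferInstance) hmZ X Y μ ↔
      CondIndepFun (MeasurableSpace.comap U inferInstance) hmU X Y μ := by
  have hUZ : MeasurableSpace.comap U inferInstance ≤
      (MeasurableSpace.comap Z inferInstance : MeasurableSpace Ω) := by
    rintro t ⟨u, hu, rfl⟩
    exact ⟨f ⁻¹' u, hf hu, by rw [hU]; rfl⟩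
  have hW : Measurable (fun ω => (X ω, Y ω)) := hX.prodMk hY
  -- key: conditional expectations of events in σ(X,Y) agree given σ(Z) and σ(U)
  have key : ∀ s : Set (EX × EY), MeasurableSet s →
      (μ[((fun ω => (X ω, Y ω)) ⁻¹' s).indicator (fun _ => (1 : ℝ)) |
          MeasurableSpace.comap Z inferInstance])
        =ᵐ[μ] μ[((fun ω => (X ω, Y ω)) ⁻¹' s).indicator (fun _ => (1 : ℝ)) |
          MeasurableSpace.comap U inferInstance] :=
    fun s hs => condexp_comap_eq_of_condIndepFun hW hZ hmU hUZ hmZ h hs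
  have keyX : ∀ s : Set EX, MeasurableSet s →
      (μ[(X ⁻¹' s).indicator (fun _ => (1 : ℝ)) | MeasurableSpace.comap Z inferInstance])
        =ᵐ[μ] μ[(X ⁻¹' s).indicator (fun _ => (1 : ℝ)) |
          MeasurableSpace.comap U inferInstance] := by
    intro s hs
    have := key (s ×ˢ Set.univ) (hs.prod MeasurableSet.univ)
    simpa [Set.mk_preimage_prod] using this
  have keyY : ∀ t : Set EY, MeasurableSet t →
      (μ[(Y ⁻¹' t).indicator (fun _ => (1 : ℝ)) | MeasurableSpace.comap Z inferInstance])
        =ᵐ[μ] μ[(Y ⁻¹' t).indicator (fun _ => (1 : ℝ)) |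
          MeasurableSpace.comap U inferInstance] := by
    intro t ht
    have := key (Set.univ ×ˢ t) (MeasurableSet.univ.prod ht)
    simpa [Set.mk_preimage_prod] using this
  have keyXY : ∀ (s : Set EX) (t : Set EY), MeasurableSet s → MeasurableSet t →
      (μ[(X ⁻¹' s ∩ Y ⁻¹' t).indicator (fun _ => (1 : ℝ)) |
          MeasurableSpace.comap Z inferInstance])
        =ᵐ[μ] μ[(X ⁻¹' s ∩ Y ⁻¹' t).indicator (fun _ => (1 : ℝ)) |
          MeasurableSpace.comap U inferInstance] := by
    intro s t hs ht
    have := key (s ×ˢ t) (hs.prod ht)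
    simpa [Set.mk_preimage_prod] using this
  rw [condIndepFun_iff_condExp_inter_preimage_eq_mul hX hY,
    condIndepFun_iff_condExp_inter_preimage_eq_mul hX hY]
  constructor
  · intro hZind s t hs ht
    filter_upwards [hZind s t hs ht, keyX s hs, keyY t ht, keyXY s t hs ht]
      with ω h1 h2 h3 h4
    rw [← h4, h1, h2, h3]
  · intro hUind s t hs ht
    filter_upwards [hUind s t hs ht, keyX s hs, keyY t ht, keyXY s t hs ht]
      with ω h1 h2 h3 h4
    rw [h4, h1, h2, h3]
end

section
/- Let A : M₁ → M₂ be a linear operator between finite-dimensional inner product spaces with orthonormal-free bases having invertible Gram matrices G₁, G₂. Then the Hilbert–Schmidt norm of A equals the Frobenius norm of G₂^{1/2} [A]_{B₂,B₁} G₁^{-1/2}. -/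
open RealInnerProductSpace Matrix

/-- HS–F identity: for a linear operator `A : M₁ → M₂` between finite-dimensional inner
product spaces whose bases have (positive definite) Gram matrices `G₁, G₂`, the
Hilbert–Schmidt norm of `A` (i.e. `√tr(A*A)`) equals the Frobenius norm of
`G₂^{1/2} [A] G₁^{-1/2}`. -/
theorem stmt7 {M₁ M₂ : Type*}
    [NormedAddCommGroup M₁] [InnerProductSpace ℝ M₁] [FiniteDimensional ℝ M₁]
    [NormedAddCommGroup M₂] [InnerProductSpace ℝ M₂] [FiniteDimensional ℝ M₂]
    {m k : ℕ} (B₁ : Module.Basis (Fin m) ℝ M₁) (B₂ : Module.Basis (Fin k) ℝ M₂)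
    (A : M₁ →ₗ[ℝ] M₂)
    (G₁ : Matrix (Fin m) (Fin m) ℝ) (hG₁entries : ∀ i j, G₁ i j = ⟪B₁ i, B₁ j⟫)
    (G₂ : Matrix (Fin k) (Fin k) ℝ) (hG₂entries : ∀ i j, G₂ i j = ⟪B₂ i, B₂ j⟫)
    (hG₁ : G₁.PosDef) (hG₂ : G₂.PosDef) :
    Real.sqrt (LinearMap.trace ℝ M₁ (LinearMap.adjoint A ∘ₗ A))
      = Real.sqrt (∑ i, ∑ j,
          ((hG₂.posSemidef.1.cfc Real.sqrt * LinearMap.toMatrix B₁ B₂ A * (hG₁.posSemidef.1.cfc Real.sqrt)⁻¹) i j) ^ 2)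
    := by
  set N := LinearMap.toMatrix B₁ B₂ A with hN
  set S₁ := hG₁.posSemidef.1.cfc Real.sqrt with hS₁
  set S₂ := hG₂.posSemidef.1.cfc Real.sqrt with hS₂
  have hS₁sym : S₁ᵀ = S₁ := by
    have := (IsSelfAdjoint.cfc (f := Real.sqrt) (a := G₁))
    rw [hG₁.posSemidef.1.cfc_eq] at this
    simpa [IsSelfAdjoint, Matrix.star_eq_conjTranspose] using this
  have hS₂sym : S₂ᵀ = S₂ := by
    have := (IsSelfAdjoint.cfc (f := Real.sqrt) (a := G₂))
    rw [hG₂.posSemidef.1.cfc_eq] at this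
    simpa [IsSelfAdjoint, Matrix.star_eq_conjTranspose] using this
  have hS₁sq : S₁ * S₁ = G₁ := by
    rw [hS₁, ← hG₁.posSemidef.1.cfc_eq, ← cfc_mul Real.sqrt Real.sqrt G₁]
    conv_rhs => rw [← cfc_id' ℝ G₁ (ha := hG₁.posSemidef.1.isSelfAdjoint)]
    refine cfc_congr fun x hx => ?_
    rw [hG₁.posSemidef.1.spectrum_real_eq_range_eigenvalues] at hx
    obtain ⟨i, rfl⟩ := hx
    exact Real.mul_self_sqrt (hG₁.posSemidef.eigenvalues_nonneg i)
  have hS₂sq : S₂ * S₂ = G₂ := by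
    rw [hS₂, ← hG₂.posSemidef.1.cfc_eq, ← cfc_mul Real.sqrt Real.sqrt G₂]
    conv_rhs => rw [← cfc_id' ℝ G₂ (ha := hG₂.posSemidef.1.isSelfAdjoint)]
    refine cfc_congr fun x hx => ?_
    rw [hG₂.posSemidef.1.spectrum_real_eq_range_eigenvalues] at hx
    obtain ⟨i, rfl⟩ := hx
    exact Real.mul_self_sqrt (hG₂.posSemidef.eigenvalues_nonneg i)
  congr 1
  -- expand inner products
  have expand₁ : ∀ (v : M₁) i, ⟪B₁ i, v⟫ = ∑ l, B₁.repr v l * ⟪B₁ i, B₁ l⟫ := by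
    intro v i
    conv_lhs => rw [← B₁.sum_repr v]
    rw [inner_sum]
    simp [real_inner_smul_right]
  have expand₂ : ∀ (w : M₂) j, ⟪w, B₂ j⟫ = ∑ l, B₂.repr w l * ⟪B₂ l, B₂ j⟫ := by
    intro w j
    conv_lhs => rw [← B₂.sum_repr w]
    rw [sum_inner]
    simp [real_inner_smul_left]
  -- matrix of the adjoint
  have key : G₁ * (LinearMap.toMatrix B₂ B₁ (LinearMap.adjoint A)) = Nᵀ * G₂ := by
    ext i j
    have lhs : (G₁ * (LinearMap.toMatrix B₂ B₁ (LinearMap.adjoint A))) i j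
        = ⟪B₁ i, LinearMap.adjoint A (B₂ j)⟫ := by
      rw [expand₁ (LinearMap.adjoint A (B₂ j)) i, Matrix.mul_apply]
      refine Finset.sum_congr rfl fun l _ => ?_
      rw [hG₁entries, LinearMap.toMatrix_apply, mul_comm]
    have rhs : (Nᵀ * G₂) i j = ⟪A (B₁ i), B₂ j⟫ := by
      rw [expand₂ (A (B₁ i)) j, Matrix.mul_apply]
      refine Finset.sum_congr rfl fun l _ => ?_
      rw [hG₂entries, Matrix.transpose_apply, hN, LinearMap.toMatrix_apply]
    rw [lhs, rhs]
    exact LinearMap.adjoint_inner_right A (B₁ i) (B₂ j)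
  have hinv := hG₁.isUnit.invertible
  have hAdj : LinearMap.toMatrix B₂ B₁ (LinearMap.adjoint A) = G₁⁻¹ * (Nᵀ * G₂) := by
    rw [← key, ← Matrix.mul_assoc, Matrix.inv_mul_of_invertible, Matrix.one_mul]
  -- trace side
  have htr : (LinearMap.trace ℝ M₁ (LinearMap.adjoint A ∘ₗ A))
      = Matrix.trace (G₁⁻¹ * (Nᵀ * G₂) * N) := by
    rw [LinearMap.trace_eq_matrix_trace ℝ B₁, LinearMap.toMatrix_comp B₁ B₂ B₁, hAdj]
  rw [htr]
  -- frobenius side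
  have hfro : (∑ i, ∑ j, ((S₂ * N * S₁⁻¹) i j) ^ 2)
      = Matrix.trace ((S₂ * N * S₁⁻¹)ᵀ * (S₂ * N * S₁⁻¹)) := by
    rw [Matrix.trace]
    simp only [Matrix.diag_apply, Matrix.mul_apply, Matrix.transpose_apply]
    rw [Finset.sum_comm]
    simp [sq]
  rw [hfro]
  have e1 : (S₂ * N * S₁⁻¹)ᵀ * (S₂ * N * S₁⁻¹) = (S₁⁻¹ * (Nᵀ * S₂)) * (S₂ * N * S₁⁻¹) := by
    rw [Matrix.transpose_mul, Matrix.transpose_mul, Matrix.transpose_nonsing_inv, hS₁sym, hS₂sym]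
  have e2 : (S₁⁻¹ * (Nᵀ * S₂)) * (S₂ * N * S₁⁻¹) = (S₁⁻¹ * (Nᵀ * (G₂ * N))) * S₁⁻¹ := by
    rw [← hS₂sq]; simp only [Matrix.mul_assoc]
  have hinv1 : S₁⁻¹ * S₁⁻¹ = G₁⁻¹ := by rw [← Matrix.mul_inv_rev, hS₁sq]
  rw [e1, e2, Matrix.trace_mul_comm (S₁⁻¹ * (Nᵀ * (G₂ * N))) S₁⁻¹]
  conv_rhs => rw [← Matrix.mul_assoc, hinv1]
  simp only [Matrix.mul_assoc]
end
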